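/- arXiv:2409.05911 — 2 statements merged into one kernel-verified Lean document; each statement's English description precedes it below -/
import Mathlib

section
/- Let τ : ℤ⁴ → ℂ satisfy the octahedral relation: for every n ∈ ℤ⁴ with n₁+n₂+n₃+n₄ = −2 and all 1 ≤ α < β < γ < δ ≤ 4: τ(n + e^α + e^β)·τ(n + e^γ + e^δ) − τ(n + e^α + e^γ)·τ(n + e^β + e^δ) + τ(n + e^α + e^δ)·τ(n + e^β + e^γ) = 0. Suppose moreover τ is doubly periodic with periods a = (5, −2, −2, −1) and b = (1, 1, −1, −1), i.e. τ(n + a) = τ(n) and τ(n + b) = τ(n) for all n ∈ ℤ⁴. Then the sequence a_l := τ(l, −l, 0, 0) satisfies the recurrence a_l² − a_{l+4}·a_{l−4} + a_{l+3}·a_{l−3} = 0 for all l ∈ ℤ. -/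
open Finset

/-- The octahedral (discrete Hirota) relation for a discrete tau function
`τ : ℤ⁴ → ℂ`. -/
def OctahedralRelation (τ : (Fin 4 → ℤ) → ℂ) : Prop :=
  ∀ n : Fin 4 → ℤ, (∑ i, n i) = -2 →
    ∀ α β γ δ : Fin 4, α < β → β < γ → γ < δ →
      τ (n + Pi.single α 1 + Pi.single β 1) * τ (n + Pi.single γ 1 + Pi.single δ 1)
        - τ (n + Pi.single α 1 + Pi.single γ 1) * τ (n + Pi.single β 1 + Pi.single δ 1)
        + τ (n + Pi.single α 1 + Pi.single δ 1) * τ (n + Pi.single β 1 + Pi.single γ 1) = 0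

/-- **The Somos-type recurrence A018896 from a doubly periodic tau function.**
If `τ : ℤ⁴ → ℂ` satisfies the octahedral relation and is periodic with periods
`a = (5, −2, −2, −1)` and `b = (1, 1, −1, −1)`, then `a_l := τ(l, −l, 0, 0)`
satisfies `a_l² − a_{l+4} a_{l−4} + a_{l+3} a_{l−3} = 0`. -/
theorem somos_recurrence_of_doubly_periodic_tau
    (τ : (Fin 4 → ℤ) → ℂ)
    (hτ : OctahedralRelation τ)
    (hper_a : ∀ n : Fin 4 → ℤ, τ (n + ![5, -2, -2, -1]) = τ n)
    (hper_b : ∀ n : Fin 4 → ℤ, τ (n + ![1, 1, -1, -1]) = τ n) :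
    ∀ l : ℤ,
      letI A : ℤ → ℂ := fun m => τ ![m, -m, 0, 0]
      A l ^ 2 - A (l + 4) * A (l - 4) + A (l + 3) * A (l - 3) = 0 := by
  intro l
  have key := hτ ![l - 1, -l - 1, 0, 0] (by simp [Fin.sum_univ_four]; ring)
    0 1 2 3 (by decide) (by decide) (by decide)
  have e1 : (![l - 1, -l - 1, 0, 0] + Pi.single (0 : Fin 4) 1 + Pi.single 1 1 : Fin 4 → ℤ)
      = ![l, -l, 0, 0] := by
    funext i; fin_cases i <;> simp [Pi.single_apply, Matrix.vecHead, Matrix.vecTail] <;> first | decide | ring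
  have e2 : (![l - 1, -l - 1, 0, 0] + Pi.single (2 : Fin 4) 1 + Pi.single 3 1 : Fin 4 → ℤ)
      = ![l - 1, -l - 1, 1, 1] := by
    funext i; fin_cases i <;> simp [Pi.single_apply, Matrix.vecHead, Matrix.vecTail] <;> first | decide | ring
  have e3 : (![l - 1, -l - 1, 0, 0] + Pi.single (0 : Fin 4) 1 + Pi.single 2 1 : Fin 4 → ℤ)
      = ![l, -l - 1, 1, 0] := by
    funext i; fin_cases i <;> simp [Pi.single_apply, Matrix.vecHead, Matrix.vecTail] <;> first | decide | ring
  have e4 : (![l - 1, -l - 1, 0, 0] + Pi.single (1 : Fin 4) 1 + Pi.single 3 1 : Fin 4 → ℤ)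
      = ![l - 1, -l, 0, 1] := by
    funext i; fin_cases i <;> simp [Pi.single_apply, Matrix.vecHead, Matrix.vecTail] <;> first | decide | ring
  have e5 : (![l - 1, -l - 1, 0, 0] + Pi.single (0 : Fin 4) 1 + Pi.single 3 1 : Fin 4 → ℤ)
      = ![l, -l - 1, 0, 1] := by
    funext i; fin_cases i <;> simp [Pi.single_apply, Matrix.vecHead, Matrix.vecTail] <;> first | decide | ring
  have e6 : (![l - 1, -l - 1, 0, 0] + Pi.single (1 : Fin 4) 1 + Pi.single 2 1 : Fin 4 → ℤ)
      = ![l - 1, -l, 1, 0] := by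
    funext i; fin_cases i <;> simp [Pi.single_apply, Matrix.vecHead, Matrix.vecTail] <;> first | decide | ring
  rw [e1, e2, e3, e4, e5, e6] at key
  -- reduce each vector to the diagonal using periodicity
  have h2 : τ ![l - 1, -l - 1, 1, 1] = τ ![l, -l, 0, 0] := by
    have := hper_b ![l - 1, -l - 1, 1, 1]
    rw [show (![l - 1, -l - 1, 1, 1] + ![1, 1, -1, -1] : Fin 4 → ℤ) = ![l, -l, 0, 0] by
      funext i; fin_cases i <;> simp [Pi.single_apply, Matrix.vecHead, Matrix.vecTail] <;> first | decide | ring] at this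
    exact this.symm
  have h3 : τ ![l, -l - 1, 1, 0] = τ ![l + 4, -(l + 4), 0, 0] := by
    have hA := hper_a ![l, -l - 1, 1, 0]
    have hB := hper_b ![l + 4, -(l + 4), 0, 0]
    rw [show (![l, -l - 1, 1, 0] + ![5, -2, -2, -1] : Fin 4 → ℤ)
        = ![l + 4, -(l + 4), 0, 0] + ![1, 1, -1, -1] by
      funext i; fin_cases i <;> simp [Pi.single_apply, Matrix.vecHead, Matrix.vecTail] <;> first | decide | ring] at hA
    rw [hB] at hA
    exact hA.symm
  have h4 : τ ![l - 1, -l, 0, 1] = τ ![l - 4, -(l - 4), 0, 0] := by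
    have hA := hper_a ![l - 6, -l + 2, 2, 2]
    have hB := hper_b ![l - 5, -l + 3, 1, 1]
    have hB2 := hper_b ![l - 6, -l + 2, 2, 2]
    rw [show (![l - 6, -l + 2, 2, 2] + ![5, -2, -2, -1] : Fin 4 → ℤ)
        = ![l - 1, -l, 0, 1] by funext i; fin_cases i <;> simp [Pi.single_apply, Matrix.vecHead, Matrix.vecTail] <;> first | decide | ring] at hA
    rw [show (![l - 5, -l + 3, 1, 1] + ![1, 1, -1, -1] : Fin 4 → ℤ)
        = ![l - 4, -(l - 4), 0, 0] by funext i; fin_cases i <;> simp [Pi.single_apply, Matrix.vecHead, Matrix.vecTail] <;> first | decide | ring] at hB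
    rw [show (![l - 6, -l + 2, 2, 2] + ![1, 1, -1, -1] : Fin 4 → ℤ)
        = ![l - 5, -l + 3, 1, 1] by funext i; fin_cases i <;> simp [Pi.single_apply, Matrix.vecHead, Matrix.vecTail] <;> first | decide | ring] at hB2
    rw [hA, ← hB2, ← hB]
  have h5 : τ ![l, -l - 1, 0, 1] = τ ![l - 3, -(l - 3), 0, 0] := by
    have hA := hper_a ![l - 5, -l + 1, 2, 2]
    have hB := hper_b ![l - 4, -l + 2, 1, 1]
    have hB2 := hper_b ![l - 5, -l + 1, 2, 2]
    rw [show (![l - 5, -l + 1, 2, 2] + ![5, -2, -2, -1] : Fin 4 → ℤ)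
        = ![l, -l - 1, 0, 1] by funext i; fin_cases i <;> simp [Pi.single_apply, Matrix.vecHead, Matrix.vecTail] <;> first | decide | ring] at hA
    rw [show (![l - 4, -l + 2, 1, 1] + ![1, 1, -1, -1] : Fin 4 → ℤ)
        = ![l - 3, -(l - 3), 0, 0] by funext i; fin_cases i <;> simp [Pi.single_apply, Matrix.vecHead, Matrix.vecTail] <;> first | decide | ring] at hB
    rw [show (![l - 5, -l + 1, 2, 2] + ![1, 1, -1, -1] : Fin 4 → ℤ)
        = ![l - 4, -l + 2, 1, 1] by funext i; fin_cases i <;> simp [Pi.single_apply, Matrix.vecHead, Matrix.vecTail] <;> first | decide | ring] at hB2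
    rw [hA, ← hB2, ← hB]
  have h6 : τ ![l - 1, -l, 1, 0] = τ ![l + 3, -(l + 3), 0, 0] := by
    have hA := hper_a ![l - 1, -l, 1, 0]
    have hB := hper_b ![l + 3, -(l + 3), 0, 0]
    rw [show (![l - 1, -l, 1, 0] + ![5, -2, -2, -1] : Fin 4 → ℤ)
        = ![l + 3, -(l + 3), 0, 0] + ![1, 1, -1, -1] by
      funext i; fin_cases i <;> simp [Pi.single_apply, Matrix.vecHead, Matrix.vecTail] <;> first | decide | ring] at hA
    rw [hB] at hA
    exact hA.symm
  rw [h2, h3, h4, h5, h6] at key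
  simp only []
  have e7 : -(l + 4) = -l - 4 := by ring
  have e8 : -(l - 4) = -(l - 4) := rfl
  calc τ ![l, -l, 0, 0] ^ 2 - τ ![l + 4, -(l + 4), 0, 0] * τ ![l - 4, -(l - 4), 0, 0]
        + τ ![l + 3, -(l + 3), 0, 0] * τ ![l - 3, -(l - 3), 0, 0]
      = τ ![l, -l, 0, 0] * τ ![l, -l, 0, 0]
        - τ ![l + 4, -(l + 4), 0, 0] * τ ![l - 4, -(l - 4), 0, 0]
        + τ ![l - 3, -(l - 3), 0, 0] * τ ![l + 3, -(l + 3), 0, 0] := by ring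
    _ = 0 := key
end

section
/- Let τ : ℤ⁴ → ℂ satisfy the octahedral relation: for every n ∈ ℤ⁴ with n₁+n₂+n₃+n₄ = −2 and all 1 ≤ α < β < γ < δ ≤ 4: τ(n + e^α + e^β)·τ(n + e^γ + e^δ) − τ(n + e^α + e^γ)·τ(n + e^β + e^δ) + τ(n + e^α + e^δ)·τ(n + e^β + e^γ) = 0. Suppose moreover τ is doubly periodic with periods a = (1, 3, −3, −1) and b = (0, 1, 2, −3), i.e. τ(n + a) = τ(n) and τ(n + b) = τ(n) for all n ∈ ℤ⁴. Then the sequence a_l := τ(0, 0, l, −l) satisfies the recurrence a_l·a_{l−6} − a_{l+3}·a_{l−9} + a_{l+2}·a_{l−8} = 0 for all l ∈ ℤ. -/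
open Finset

lemma add4 (a b c d e f g h : ℤ) :
    (![a,b,c,d] + ![e,f,g,h] : Fin 4 → ℤ) = ![a+e,b+f,c+g,d+h] := by
  funext i; fin_cases i <;> rfl

lemma sub4 (a b c d e f g h : ℤ) :
    (![a,b,c,d] - ![e,f,g,h] : Fin 4 → ℤ) = ![a-e,b-f,c-g,d-h] := by
  funext i; fin_cases i <;> rfl

lemma veq {a b c d a' b' c' d' : ℤ} (h1 : a = a') (h2 : b = b') (h3 : c = c')
    (h4 : d = d') : (![a,b,c,d] : Fin 4 → ℤ) = ![a',b',c',d'] := by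
  subst h1 h2 h3 h4; rfl

lemma single0 : (Pi.single (0 : Fin 4) (1:ℤ)) = ![1,0,0,0] := by
  funext i; fin_cases i <;> simp
lemma single1 : (Pi.single (1 : Fin 4) (1:ℤ)) = ![0,1,0,0] := by
  funext i; fin_cases i <;> simp
lemma single2 : (Pi.single (2 : Fin 4) (1:ℤ)) = ![0,0,1,0] := by
  funext i; fin_cases i <;> simp
lemma single3 : (Pi.single (3 : Fin 4) (1:ℤ)) = ![0,0,0,1] := by
  funext i; fin_cases i <;> simp

/-- **A new Somos-type recurrence from a doubly periodic tau function.**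
If `τ : ℤ⁴ → ℂ` satisfies the octahedral relation and is periodic with periods
`a = (1, 3, −3, −1)` and `b = (0, 1, 2, −3)`, then `a_l := τ(0, 0, l, −l)`
satisfies `a_l a_{l−6} − a_{l+3} a_{l−9} + a_{l+2} a_{l−8} = 0`. -/
theorem new_somos_recurrence_of_doubly_periodic_tau
    (τ : (Fin 4 → ℤ) → ℂ)
    (hτ : OctahedralRelation τ)
    (hper_a : ∀ n : Fin 4 → ℤ, τ (n + ![1, 3, -3, -1]) = τ n)
    (hper_b : ∀ n : Fin 4 → ℤ, τ (n + ![0, 1, 2, -3]) = τ n) :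
    ∀ l : ℤ,
      letI A : ℤ → ℂ := fun m => τ ![0, 0, m, -m]
      A l * A (l - 6) - A (l + 3) * A (l - 9) + A (l + 2) * A (l - 8) = 0 := by
  intro l
  dsimp only
  have hA : ∀ n : Fin 4 → ℤ, τ n = τ (n + ![1, 3, -3, -1]) := fun n => (hper_a n).symm
  have hB : ∀ n : Fin 4 → ℤ, τ n = τ (n + ![0, 1, 2, -3]) := fun n => (hper_b n).symm
  have hB' : ∀ n : Fin 4 → ℤ, τ n = τ (n - ![0, 1, 2, -3]) := by
    intro n
    have := hper_b (n - ![0, 1, 2, -3])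
    rwa [sub_add_cancel] at this
  have h := hτ ![-1, -1, l, -l] (by simp [Fin.sum_univ_four]) 0 1 2 3
    (by decide) (by decide) (by decide)
  rw [single0, single1, single2, single3] at h
  rw [add4, add4, add4, add4, add4, add4, add4, add4] at h
  norm_num at h
  -- term n+e1+e2 = (0,0,l,-l)
  have t12 : (![(-1:ℤ)+1, -1+1, l, -l] : Fin 4 → ℤ) = ![0, 0, l, -l] :=
    veq (by ring) (by ring) rfl rfl
  -- term n+e3+e4 = (-1,-1,l+1,-l+1) ~ (0,0,l-6,-(l-6))
  have t34 : τ (![(-1:ℤ), -1, l+1, -l+1] : Fin 4 → ℤ) = τ ![0, 0, l-6, -(l-6)] := by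
    rw [hA ![(-1:ℤ), -1, l+1, -l+1], add4,
      hB' (![(-1:ℤ)+1, -1+3, l+1+-3, -l+1+-1] : Fin 4 → ℤ), sub4,
      hB' (![(-1:ℤ)+1-0, -1+3-1, l+1+-3-2, -l+1+-1- -3] : Fin 4 → ℤ), sub4]
    exact congrArg τ (veq (by ring) (by ring) (by ring) (by ring))
  -- term n+e1+e3 = (0,-1,l+1,-l) ~ (0,0,l+3,-(l+3))
  have t13 : τ (![(0:ℤ), -1, l+1, -l] : Fin 4 → ℤ) = τ ![0, 0, l+3, -(l+3)] := by
    rw [hB ![(0:ℤ), -1, l+1, -l], add4]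
    exact congrArg τ (veq (by ring) (by ring) (by ring) (by ring))
  -- term n+e2+e4 = (-1,0,l,-l+1) ~ (0,0,l-9,-(l-9))
  have t24 : τ (![(-1:ℤ), 0, l, -l+1] : Fin 4 → ℤ) = τ ![0, 0, l-9, -(l-9)] := by
    rw [hA ![(-1:ℤ), 0, l, -l+1], add4,
      hB' (![(-1:ℤ)+1, 0+3, l+-3, -l+1+-1] : Fin 4 → ℤ), sub4,
      hB' (![(-1:ℤ)+1-0, 0+3-1, l+-3-2, -l+1+-1- -3] : Fin 4 → ℤ), sub4,
      hB' (![(-1:ℤ)+1-0-0, 0+3-1-1, l+-3-2-2, -l+1+-1- -3- -3] : Fin 4 → ℤ), sub4]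
    exact congrArg τ (veq (by ring) (by ring) (by ring) (by ring))
  -- term n+e1+e4 = (0,-1,l,-l+1) ~ (0,0,l+2,-(l+2))
  have t14 : τ (![(0:ℤ), -1, l, -l+1] : Fin 4 → ℤ) = τ ![0, 0, l+2, -(l+2)] := by
    rw [hB ![(0:ℤ), -1, l, -l+1], add4]
    exact congrArg τ (veq (by ring) (by ring) (by ring) (by ring))
  -- term n+e2+e3 = (-1,0,l+1,-l) ~ (0,0,l-8,-(l-8))
  have t23 : τ (![(-1:ℤ), 0, l+1, -l] : Fin 4 → ℤ) = τ ![0, 0, l-8, -(l-8)] := by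
    rw [hA ![(-1:ℤ), 0, l+1, -l], add4,
      hB' (![(-1:ℤ)+1, 0+3, l+1+-3, -l+-1] : Fin 4 → ℤ), sub4,
      hB' (![(-1:ℤ)+1-0, 0+3-1, l+1+-3-2, -l+-1- -3] : Fin 4 → ℤ), sub4,
      hB' (![(-1:ℤ)+1-0-0, 0+3-1-1, l+1+-3-2-2, -l+-1- -3- -3] : Fin 4 → ℤ), sub4]
    exact congrArg τ (veq (by ring) (by ring) (by ring) (by ring))
  rw [t34, t13, t24, t14, t23] at h
  convert h using 2
end
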